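/- Let Λ ⊆ ℝ^n be a lattice and Φ an expanding injective endomorphism of ℝ^n with Φ(Λ) ⊆ Λ. Let w_0 be a positive integer such that |λ| > 2^{1/w_0} for all eigenvalues λ of Φ, and let ‖·‖ be a vector norm whose induced operator norm satisfies ‖Φ^{−1}‖ < 2^{−1/w_0}. Let V = {z ∈ ℝ^n : ‖z‖ ≤ ‖z + α‖ for all α ∈ Λ} be the Voronoi cell of the origin. For w ≥ w_0, let D• ⊆ {α ∈ Λ : Φ^{−w}(α) ∈ V} be a set of representatives of the residue classes of Λ mod Φ^w(Λ) not contained in Φ(Λ), and D = D• ∪ {0} (a minimal norm digit set modulo Φ^w). Then D is a w-NADS: every element of Λ has a D-w-NAF expansion. -/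

import Mathlib

/-- Theorem 5.2: a minimal norm digit set modulo `Φ^w` (digits chosen with
`Φ^{-w}`-image in the Voronoi cell of the origin) is a `w`-NADS for every
`w ≥ w₀`, where `|λ| > 2^{1/w₀}` for all eigenvalues `λ` of `Φ` and
`‖Φ⁻¹‖ < 2^{-1/w₀}`. -/
theorem minimal_norm_digit_set_wNADS
    {E : Type*} [NormedAddCommGroup E] [NormedSpace ℝ E] [FiniteDimensional ℝ E]
    {n : ℕ} (b : Module.Basis (Fin n) ℝ E)
    (Λ : Set E) (hΛ : Λ = ↑(Submodule.span ℤ (Set.range ⇑b)))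
    (Φ : E ≃ₗ[ℝ] E) (hΦΛ : ∀ x ∈ Λ, Φ x ∈ Λ)
    (w₀ : ℕ) (hw₀ : 1 ≤ w₀)
    (hexp : ∀ lam : ℂ,
      (Polynomial.map (algebraMap ℝ ℂ) (LinearMap.charpoly (Φ : E →ₗ[ℝ] E))).IsRoot lam →
      (2 : ℝ) ^ ((1 : ℝ) / w₀) < ‖lam‖)
    (q : ℝ) (hq : q = ‖LinearMap.toContinuousLinearMap (Φ.symm : E →ₗ[ℝ] E)‖)
    (hq1 : q < ((2 : ℝ) ^ ((1 : ℝ) / w₀))⁻¹)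
    (V : Set E) (hV : V = {z : E | ∀ α ∈ Λ, ‖z‖ ≤ ‖z + α‖})
    (w : ℕ) (hw : w₀ ≤ w)
    (Dbul : Set E)
    (hDV : Dbul ⊆ {α ∈ Λ | (Φ ^ w).symm α ∈ V})
    (hDnot : ∀ δ ∈ Dbul, δ ∉ ⇑Φ '' Λ)
    (hDrep : ∀ α ∈ Λ, α ∉ ⇑Φ '' Λ →
      ∃! δ, δ ∈ Dbul ∧ α - δ ∈ ⇑(Φ ^ w) '' Λ) :
    ∀ α ∈ Λ, ∃ (ℓ : ℕ) (η : Fin ℓ → E),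
      (∀ j, η j ∈ insert (0 : E) Dbul) ∧
      (∀ i j : Fin ℓ, (i : ℕ) < (j : ℕ) → (j : ℕ) < (i : ℕ) + w → η i ≠ 0 → η j = 0) ∧
      (∑ j : Fin ℓ, ((Φ : E →ₗ[ℝ] E) ^ (j : ℕ)) (η j)) = α := by
  clear hexp
  subst hΛ hV
  set S := Submodule.span ℤ (Set.range ⇑b) with hS
  have hw1 : 1 ≤ w := le_trans hw₀ hw
  -- numeric facts
  have hq0 : 0 ≤ q := hq ▸ norm_nonneg _
  have h2pos : (0:ℝ) < (2:ℝ) ^ ((1:ℝ)/w₀) := Real.rpow_pos_of_pos two_pos _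
  have hww : ((w₀:ℕ):ℝ) ≠ 0 := Nat.cast_ne_zero.mpr (by omega)
  have h2ge1 : (1:ℝ) ≤ (2:ℝ) ^ ((1:ℝ)/w₀) := by
    calc (1:ℝ) = (2:ℝ) ^ (0:ℝ) := (Real.rpow_zero 2).symm
      _ ≤ (2:ℝ) ^ ((1:ℝ)/w₀) :=
        Real.rpow_le_rpow_of_exponent_le one_le_two (by positivity)
  have hq1' : q < 1 := lt_of_lt_of_le hq1 (by
    rw [inv_le_one_iff₀]; right; exact h2ge1)
  have hpow2 : ((2:ℝ) ^ ((1:ℝ)/w₀)) ^ w₀ = 2 := by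
    rw [← Real.rpow_natCast ((2:ℝ)^((1:ℝ)/w₀)) w₀, ← Real.rpow_mul (by norm_num),
      one_div, inv_mul_cancel₀ hww, Real.rpow_one]
  have hqw : 2 * q ^ w < 1 := by
    have h1 : q ^ w ≤ q ^ w₀ := pow_le_pow_of_le_one hq0 hq1'.le hw
    have h2 : q ^ w₀ < (((2:ℝ) ^ ((1:ℝ)/w₀))⁻¹) ^ w₀ := by
      apply pow_lt_pow_left₀ hq1 hq0 (by omega)
    rw [inv_pow, hpow2] at h2
    nlinarith
  -- norm bounds
  have hnorm : ∀ x : E, ‖Φ.symm x‖ ≤ q * ‖x‖ := by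
    intro x
    rw [hq]
    simpa using (LinearMap.toContinuousLinearMap (Φ.symm : E →ₗ[ℝ] E)).le_opNorm x
  have hsymm_succ : ∀ (k:ℕ) (x:E), (Φ^(k+1)).symm x = (Φ^k).symm (Φ.symm x) := by
    intro k x
    apply (Φ^(k+1)).injective
    rw [LinearEquiv.apply_symm_apply]
    rw [show (Φ^(k+1) : E ≃ₗ[ℝ] E) ((Φ^k).symm (Φ.symm x))
        = Φ ((Φ^k) ((Φ^k).symm (Φ.symm x))) by rw [pow_succ']; rfl]
    rw [LinearEquiv.apply_symm_apply, LinearEquiv.apply_symm_apply]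
  have hnormk : ∀ (k:ℕ) (x:E), ‖(Φ^k).symm x‖ ≤ q^k * ‖x‖ := by
    intro k
    induction k with
    | zero =>
      intro x
      have h0 : ((Φ^0 : E ≃ₗ[ℝ] E)).symm x = x := by
        apply (Φ^0).injective
        rw [LinearEquiv.apply_symm_apply, pow_zero]
        rfl
      rw [h0, pow_zero, one_mul]
    | succ k ih =>
      intro x
      rw [hsymm_succ k x]
      calc ‖(Φ^k).symm (Φ.symm x)‖ ≤ q^k * ‖Φ.symm x‖ := ih _
        _ ≤ q^k * (q * ‖x‖) := by
            exact mul_le_mul_of_nonneg_left (hnorm x) (pow_nonneg hq0 k)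
        _ = q^(k+1) * ‖x‖ := by ring
  -- finiteness of bounded subsets of the lattice
  have hfin : ∀ r : ℝ, {x ∈ (↑S : Set E) | ‖x‖ ≤ r}.Finite := by
    intro r
    have hd : DiscreteTopology (↑(S.toAddSubgroup) : Set E) :=
      inferInstanceAs (DiscreteTopology S.toAddSubgroup)
    have hfin' := Metric.finite_isBounded_inter_isClosed
      (K := Metric.closedBall (0:E) r) (s := (S.toAddSubgroup : Set E))
      (isDiscrete_iff_discreteTopology.mpr hd) Metric.isBounded_closedBall AddSubgroup.isClosed_of_discrete
    refine hfin'.subset ?_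
    rintro x ⟨hx1, hx2⟩
    exact ⟨mem_closedBall_zero_iff.mpr hx2, hx1⟩
  -- cardinality decrease
  have hstep : ∀ β γ : E, β ∈ (↑S : Set E) → ‖γ‖ < ‖β‖ →
      {x ∈ (↑S:Set E) | ‖x‖ ≤ ‖γ‖}.ncard < {x ∈ (↑S:Set E) | ‖x‖ ≤ ‖β‖}.ncard := by
    intro β γ hβ h
    refine Set.ncard_lt_ncard ⟨?_, ?_⟩ (hfin _)
    · rintro x ⟨hx1, hx2⟩
      exact ⟨hx1, le_of_lt (lt_of_le_of_lt hx2 h)⟩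
    · intro hsub
      have := hsub ⟨hβ, le_refl _⟩
      exact absurd this.2 (not_le.mpr h)
  -- list machinery
  set val : List E → E := fun l => l.foldr (fun d r => d + Φ r) 0 with hval
  have val_nil : val [] = 0 := rfl
  have val_cons : ∀ (d : E) (l : List E), val (d :: l) = d + Φ (val l) := fun _ _ => rfl
  set naf : List E → Prop :=
    fun l => ∀ i j : ℕ, i < j → j < i + w → l.getD i 0 ≠ 0 → l.getD j 0 = 0 with hnaf
  have val_pad : ∀ (k : ℕ) (l : List E),
      val (List.replicate k 0 ++ l) = (Φ^k) (val l) := by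
    intro k
    induction k with
    | zero => intro l; simp
    | succ k ih =>
      intro l
      rw [List.replicate_succ, List.cons_append, val_cons, ih, zero_add,
        show (Φ^(k+1) : E ≃ₗ[ℝ] E) (val l) = Φ ((Φ^k) (val l)) by rw [pow_succ']; rfl]
  have getD_pad : ∀ (k : ℕ) (l : List E) (i : ℕ),
      (List.replicate k (0:E) ++ l).getD i 0 = if i < k then 0 else l.getD (i-k) 0 := by
    intro k
    induction k with
    | zero => intro l i; simp
    | succ k ih =>
      intro l i
      rw [List.replicate_succ, List.cons_append]
      cases i with
      | zero => simp
      | succ i =>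
        rw [List.getD_cons_succ, ih]
        by_cases h : i < k
        · rw [if_pos h, if_pos (by omega)]
        · rw [if_neg h, if_neg (by omega)]
          congr 1
          omega
  -- main recursion
  have main : ∀ N : ℕ, ∀ β ∈ (↑S : Set E), {x ∈ (↑S:Set E) | ‖x‖ ≤ ‖β‖}.ncard ≤ N →
      ∃ l : List E, (∀ d ∈ l, d ∈ insert (0:E) Dbul) ∧ naf l ∧ val l = β := by
    intro N
    induction N with
    | zero =>
      intro β hβ hcard
      exfalso
      have hmem : β ∈ {x ∈ (↑S:Set E) | ‖x‖ ≤ ‖β‖} := ⟨hβ, le_refl _⟩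
      have := (Set.ncard_pos (hfin ‖β‖)).mpr ⟨β, hmem⟩
      omega
    | succ N ih =>
      intro β hβ hcard
      by_cases hβ0 : β = 0
      · exact ⟨[], by simp, fun i j _ _ h => absurd (by simp) h, by rw [val_nil, hβ0]⟩
      have hβpos : 0 < ‖β‖ := norm_pos_iff.mpr hβ0
      by_cases hβΦ : β ∈ ⇑Φ '' (↑S : Set E)
      · obtain ⟨γ, hγ, hγβ⟩ := hβΦ
        have hγn : ‖γ‖ < ‖β‖ := by
          have h1 : ‖γ‖ ≤ q * ‖β‖ := by
            calc ‖γ‖ = ‖Φ.symm β‖ := by rw [← hγβ, LinearEquiv.symm_apply_apply]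
              _ ≤ q * ‖β‖ := hnorm β
          calc ‖γ‖ ≤ q * ‖β‖ := h1
            _ < 1 * ‖β‖ := by exact mul_lt_mul_of_pos_right hq1' hβpos
            _ = ‖β‖ := one_mul _
        obtain ⟨l, h1, h2, h3⟩ := ih γ hγ (by have := hstep β γ hβ hγn; omega)
        refine ⟨(0:E) :: l, ?_, ?_, ?_⟩
        · intro d hd
          rcases List.mem_cons.mp hd with h | h
          · rw [h]; exact Set.mem_insert _ _
          · exact h1 d h
        · intro i j hij hjw hi
          cases i with
          | zero => exact absurd (List.getD_cons_zero) hi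
          | succ i =>
            cases j with
            | zero => omega
            | succ j =>
              rw [List.getD_cons_succ] at hi ⊢
              exact h2 i j (by omega) (by omega) hi
        · rw [val_cons, h3, zero_add, hγβ]
      · obtain ⟨δ, ⟨hδD, hδrep⟩⟩ := (hDrep β hβ hβΦ).exists
        obtain ⟨γ, hγS, hγ⟩ := hδrep
        have hδΛ : δ ∈ (↑S : Set E) := (hDV hδD).1
        have hδ0 : δ ≠ 0 := by
          intro h
          exact hDnot δ hδD ⟨0, S.zero_mem, by rw [map_zero, h]⟩
        -- Voronoi bound
        have hzV : ∀ α ∈ (↑S : Set E), ‖(Φ^w).symm δ‖ ≤ ‖(Φ^w).symm δ + α‖ := (hDV hδD).2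
        have hsum : (Φ^w).symm δ + γ = (Φ^w).symm β := by
          apply (Φ^w).injective
          rw [map_add, LinearEquiv.apply_symm_apply, LinearEquiv.apply_symm_apply, hγ]
          abel
        have hz : ‖(Φ^w).symm δ‖ ≤ ‖(Φ^w).symm β‖ := by
          have := hzV γ hγS
          rwa [hsum] at this
        have hγn : ‖γ‖ < ‖β‖ := by
          have hγeq : γ = ((Φ^w).symm δ + γ) - (Φ^w).symm δ := by abel
          calc ‖γ‖ = ‖((Φ^w).symm δ + γ) - (Φ^w).symm δ‖ := by rw [← hγeq]
            _ ≤ ‖(Φ^w).symm δ + γ‖ + ‖(Φ^w).symm δ‖ := norm_sub_le _ _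
            _ = ‖(Φ^w).symm β‖ + ‖(Φ^w).symm δ‖ := by rw [hsum]
            _ ≤ ‖(Φ^w).symm β‖ + ‖(Φ^w).symm β‖ := by linarith
            _ = 2 * ‖(Φ^w).symm β‖ := by ring
            _ ≤ 2 * (q^w * ‖β‖) := by
                have := hnormk w β
                linarith
            _ = (2 * q^w) * ‖β‖ := by ring
            _ < 1 * ‖β‖ := mul_lt_mul_of_pos_right hqw hβpos
            _ = ‖β‖ := one_mul _
        obtain ⟨l, h1, h2, h3⟩ := ih γ hγS (by have := hstep β γ hβ hγn; omega)
        refine ⟨δ :: (List.replicate (w-1) 0 ++ l), ?_, ?_, ?_⟩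
        · intro d hd
          rcases List.mem_cons.mp hd with h | h
          · rw [h]; exact Set.mem_insert_of_mem _ hδD
          · rcases List.mem_append.mp h with h | h
            · rw [List.eq_of_mem_replicate h]; exact Set.mem_insert _ _
            · exact h1 d h
        · intro i j hij hjw hi
          cases j with
          | zero => omega
          | succ j =>
            rw [List.getD_cons_succ, getD_pad]
            cases i with
            | zero =>
              rw [if_pos (by omega)]
            | succ i =>
              rw [List.getD_cons_succ, getD_pad] at hi
              by_cases hik : i < w - 1
              · rw [if_pos hik] at hi; exact absurd rfl hi
              · rw [if_neg hik] at hi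
                rw [if_neg (by omega)]
                exact h2 (i - (w-1)) (j - (w-1)) (by omega) (by omega) hi
        · rw [val_cons, val_pad, h3]
          have hcomp : (Φ^w : E ≃ₗ[ℝ] E) γ = Φ ((Φ^(w-1)) γ) := by
            conv_lhs => rw [show w = (w-1)+1 by omega]
            rw [pow_succ']
            rfl
          rw [← hcomp, hγ]
          abel
  -- conclude
  have sum_val : ∀ l : List E,
      (∑ j : Fin l.length, ((Φ : E →ₗ[ℝ] E) ^ (j : ℕ)) (l.getD (↑j) 0)) = val l := by
    intro l
    induction l with
    | nil => simp [val_nil]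
    | cons d l ihl =>
      have hterm : ∀ j : Fin l.length,
          ((Φ : E →ₗ[ℝ] E) ^ ((j.succ : Fin (l.length+1)) : ℕ)) ((d :: l).getD (↑(j.succ)) 0)
            = (Φ : E →ₗ[ℝ] E) (((Φ : E →ₗ[ℝ] E) ^ (j : ℕ)) (l.getD (↑j) 0)) := by
        intro j
        rw [Fin.val_succ, List.getD_cons_succ, pow_succ', Module.End.mul_apply]
      show (∑ j : Fin (l.length+1), ((Φ : E →ₗ[ℝ] E) ^ (j:ℕ)) ((d::l).getD (↑j) 0))
          = val (d::l)
      rw [Fin.sum_univ_succ, val_cons, Finset.sum_congr rfl (fun j _ => hterm j),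
        ← map_sum, ihl]
      simp
  intro α hα
  obtain ⟨l, h1, h2, h3⟩ := main {x ∈ (↑S:Set E) | ‖x‖ ≤ ‖α‖}.ncard α hα (le_refl _)
  refine ⟨l.length, fun j => l.getD (↑j) 0, ?_, ?_, (sum_val l).trans h3⟩
  · intro j
    show l.getD (↑j) 0 ∈ insert (0:E) Dbul
    rw [List.getD_eq_getElem l 0 j.isLt]
    exact h1 _ (List.getElem_mem _)
  · intro i j hij hjw hi
    exact h2 i j hij hjw hi
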